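/- Let P₁, P₂, τ₁, τ₂ > 0 satisfy τ₂·γ(P₁) ≤ τ₁·(γ(P₁+P₂) − γ(P₁)) (Case I), write a = γ(P₁), b = γ(P₂), s = γ(P₁+P₂), and let R = {(d₁, d₂) ∈ ℝ² : a·d₁ ≥ τ₁, b·d₂ ≥ τ₂, a·d₁ + (s−a)·d₂ ≥ τ₁ + τ₂}. Set w₂ = a/s, Ā = (τ₁/a + (a+b−s)·τ₂/(a·b), τ₂/b) and B̄ = (τ₁/a, τ₂/(s−a)). Then Ā ∈ R and B̄ ∈ R, and for every w ∈ [0,1] and every (d₁, d₂) ∈ R: if w ∈ [0, w₂] then w·Ā₁ + (1−w)·Ā₂ ≤ w·d₁ + (1−w)·d₂, and if w ∈ [w₂, 1] then w·B̄₁ + (1−w)·B̄₂ ≤ w·d₁ + (1−w)·d₂. -/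

import Mathlib

/-- γ(x) = (1/2)·log₂(1+x). -/
noncomputable def gam (x : ℝ) : ℝ := (1/2) * Real.logb 2 (1 + x)

lemma gam_pos {x : ℝ} (hx : 0 < x) : 0 < gam x := by
  have : (1:ℝ) < 1 + x := by linarith
  have := Real.logb_pos (by norm_num : (1:ℝ) < 2) this
  unfold gam; linarith

lemma gam_lt {x y : ℝ} (hx : 0 < x) (hxy : x < y) : gam x < gam y := by
  have : Real.logb 2 (1 + x) < Real.logb 2 (1 + y) :=
    Real.logb_lt_logb (by norm_num) (by linarith) (by linarith)
  unfold gam; linarith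

lemma gam_subadd {x y : ℝ} (hx : 0 < x) (hy : 0 < y) :
    gam (x + y) ≤ gam x + gam y := by
  have h1 : Real.logb 2 (1 + (x + y)) ≤ Real.logb 2 ((1 + x) * (1 + y)) := by
    apply Real.logb_le_logb_of_le (by norm_num : (1:ℝ) < 2) (by positivity)
    nlinarith
  have h2 : Real.logb 2 ((1 + x) * (1 + y)) =
      Real.logb 2 (1 + x) + Real.logb 2 (1 + y) :=
    Real.logb_mul (by positivity) (by positivity)
  unfold gam; linarith [h1, h2.le]

theorem stmt_14 (P₁ P₂ τ₁ τ₂ a b s : ℝ) (hP₁ : 0 < P₁) (hP₂ : 0 < P₂)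
    (hτ₁ : 0 < τ₁) (hτ₂ : 0 < τ₂)
    (ha : a = gam P₁) (hb : b = gam P₂) (hs : s = gam (P₁ + P₂))
    (hcase : τ₂ * a ≤ τ₁ * (s - a))
    (R : Set (ℝ × ℝ))
    (hR : R = {d : ℝ × ℝ | a * d.1 ≥ τ₁ ∧ b * d.2 ≥ τ₂ ∧
        a * d.1 + (s - a) * d.2 ≥ τ₁ + τ₂}) :
    (τ₁ / a + (a + b - s) * τ₂ / (a * b), τ₂ / b) ∈ R ∧
    (τ₁ / a, τ₂ / (s - a)) ∈ R ∧
    ∀ w : ℝ, w ∈ Set.Icc (0:ℝ) 1 → ∀ d : ℝ × ℝ, d ∈ R →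
      (w ∈ Set.Icc (0:ℝ) (a / s) →
        w * (τ₁ / a + (a + b - s) * τ₂ / (a * b)) + (1 - w) * (τ₂ / b) ≤
          w * d.1 + (1 - w) * d.2) ∧
      (w ∈ Set.Icc (a / s) 1 →
        w * (τ₁ / a) + (1 - w) * (τ₂ / (s - a)) ≤ w * d.1 + (1 - w) * d.2) := by
  have ha' : 0 < a := ha ▸ gam_pos hP₁
  have hb' : 0 < b := hb ▸ gam_pos hP₂
  have has : a < s := by rw [ha, hs]; exact gam_lt hP₁ (by linarith)
  have hsab : s ≤ a + b := by rw [ha, hb, hs]; exact gam_subadd hP₁ hP₂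
  have hsa : 0 < s - a := by linarith
  have hs0 : 0 < s := by linarith
  have hab : (0:ℝ) ≤ a + b - s := by linarith
  refine ⟨?_, ?_, ?_⟩
  · rw [hR]
    refine ⟨?_, ?_, ?_⟩
    · show τ₁ ≤ a * (τ₁ / a + (a + b - s) * τ₂ / (a * b))
      rw [← sub_nonneg]
      have : a * (τ₁ / a + (a + b - s) * τ₂ / (a * b)) - τ₁
          = (a + b - s) * τ₂ / b := by field_simp; ring
      rw [this]
      exact div_nonneg (mul_nonneg hab hτ₂.le) hb'.le
    · show τ₂ ≤ b * (τ₂ / b)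
      rw [mul_div_cancel₀ _ hb'.ne']
    · show τ₁ + τ₂ ≤ a * (τ₁ / a + (a + b - s) * τ₂ / (a * b)) + (s - a) * (τ₂ / b)
      have : a * (τ₁ / a + (a + b - s) * τ₂ / (a * b)) + (s - a) * (τ₂ / b)
          = τ₁ + τ₂ := by field_simp; ring
      rw [this]
  · rw [hR]
    refine ⟨?_, ?_, ?_⟩
    · show τ₁ ≤ a * (τ₁ / a)
      rw [mul_div_cancel₀ _ ha'.ne']
    · show τ₂ ≤ b * (τ₂ / (s - a))
      rw [← sub_nonneg]
      have : b * (τ₂ / (s - a)) - τ₂ = (a + b - s) * τ₂ / (s - a) := by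
        field_simp; ring
      rw [this]
      exact div_nonneg (mul_nonneg hab hτ₂.le) hsa.le
    · show τ₁ + τ₂ ≤ a * (τ₁ / a) + (s - a) * (τ₂ / (s - a))
      have : a * (τ₁ / a) + (s - a) * (τ₂ / (s - a)) = τ₁ + τ₂ := by
        field_simp
      rw [this]
  · intro w hw d hd
    rw [hR] at hd
    obtain ⟨h1, h2, h3⟩ := hd
    constructor
    · intro hw2
      have hws : w * s ≤ a := by
        have := hw2.2
        rwa [le_div_iff₀ hs0] at this
      have hab2 : 0 < a * b := mul_pos ha' hb'
      have eLHS : a * b * (w * (τ₁ / a + (a + b - s) * τ₂ / (a * b)) + (1 - w) * (τ₂ / b))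
          = w * b * τ₁ + w * (a + b - s) * τ₂ + (1 - w) * a * τ₂ := by
        field_simp
      have key : a * b * (w * (τ₁ / a + (a + b - s) * τ₂ / (a * b)) + (1 - w) * (τ₂ / b))
          ≤ a * b * (w * d.1 + (1 - w) * d.2) := by
        rw [eLHS]
        have hA : w * b * (τ₁ + τ₂) ≤ w * b * (a * d.1 + (s - a) * d.2) :=
          mul_le_mul_of_nonneg_left h3 (mul_nonneg hw2.1 hb'.le)
        have hB : (a - w * s) * τ₂ ≤ (a - w * s) * (b * d.2) :=
          mul_le_mul_of_nonneg_left h2 (by linarith)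
        nlinarith [hA, hB]
      exact le_of_mul_le_mul_left key hab2
    · intro hw2
      have hws : a ≤ w * s := by
        have := hw2.1
        rwa [div_le_iff₀ hs0] at this
      have hab2 : 0 < a * (s - a) := mul_pos ha' hsa
      have eLHS : a * (s - a) * (w * (τ₁ / a) + (1 - w) * (τ₂ / (s - a)))
          = w * (s - a) * τ₁ + (1 - w) * a * τ₂ := by
        field_simp
      have key : a * (s - a) * (w * (τ₁ / a) + (1 - w) * (τ₂ / (s - a)))
          ≤ a * (s - a) * (w * d.1 + (1 - w) * d.2) := by
        rw [eLHS]
        have hA : (w * s - a) * τ₁ ≤ (w * s - a) * (a * d.1) :=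
          mul_le_mul_of_nonneg_left h1 (by linarith)
        have hB : a * (1 - w) * (τ₁ + τ₂) ≤ a * (1 - w) * (a * d.1 + (s - a) * d.2) :=
          mul_le_mul_of_nonneg_left h3 (mul_nonneg ha'.le (by linarith [hw2.2]))
        nlinarith [hA, hB]
      exact le_of_mul_le_mul_left key hab2
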